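/- Let $k \ge 2$ and $p = 2k$. There exist $\overline{\mu}_1 > \overline{\mu}_2 > \cdots > \overline{\mu}_k > 0$ and $\varepsilon_0 > 0$ such that for every $j \in \mathbb{N}$ and every point $(\mu_1, \dots, \mu_k, \nu) \in \mathbb{R}^{k+1}$ with $\max\{|\mu_1 - \overline{\mu}_1|, \dots, |\mu_k - \overline{\mu}_k|, |\nu|\} < \varepsilon_0\, j^{2-p}$, the derivative (Jacobian matrix) of $F^{(j)} = (F^{(j)}_1, \dots, F^{(j)}_k) : \mathbb{R}^{k+1} \to \mathbb{R}^k$ at $(\mu_1, \dots, \mu_k, \nu)$ has rank $k$. -/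

import Mathlib

open Finset

/-- `Ccoef m α = C_{m,α} = ∑_{n₁+⋯+n_α = m, nᵢ ≥ 1} (2m)! / ((2n₁)! ⋯ (2n_α)!)`. -/
def Ccoef (m α : ℕ) : ℕ :=
  ∑ c ∈ (Finset.Nat.antidiagonalTuple α m).filter (fun c => ∀ i, 1 ≤ c i),
    Nat.multinomial Finset.univ (fun i => 2 * c i)

/-- The polynomial `H_m(μ₁, …, μ_k) = ∑_{α=1}^m ∑_{S ⊆ {1,…,k}, |S| = α} C_{m,α} ∏_{i∈S} μᵢ`,
with the convention `H₀ = 1`. -/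
def Hpoly (k m : ℕ) (μ : Fin k → ℝ) : ℝ :=
  ∑ α ∈ Finset.range (m + 1), ∑ S ∈ Finset.univ.powersetCard α,
    (Ccoef m α : ℝ) * ∏ i ∈ S, μ i

/-- `F^{(j)}_m(μ₁,…,μ_k, ν) = H_m(μ) + ν ∑_{l=1}^m (2m choose 2l) j^{2l} H_{m-l}(μ)`. -/
def Fpoly (k j m : ℕ) (μ : Fin k → ℝ) (ν : ℝ) : ℝ :=
  Hpoly k m μ +
    ν * ∑ l ∈ Finset.Icc 1 m, ((2 * m).choose (2 * l) : ℝ) * (j : ℝ) ^ (2 * l) *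
      Hpoly k (m - l) μ

/-- The map `F^{(j)} : ℝ^{k+1} → ℝ^k` with components `F^{(j)}_m`, `m = 1, …, k`. -/
def Fmap (k j : ℕ) : (Fin k → ℝ) × ℝ → (Fin k → ℝ) :=
  fun z m => Fpoly k j (m.1 + 1) z.1 z.2

def dH (k m : ℕ) (i : Fin k) (μ : Fin k → ℝ) : ℝ :=
  ∑ α ∈ Finset.range (m + 1), ∑ S ∈ Finset.univ.powersetCard α,
    if i ∈ S then (Ccoef m α : ℝ) * ∏ i' ∈ S.erase i, μ i' else 0

noncomputable def gradH (k m : ℕ) (μ : Fin k → ℝ) : (Fin k → ℝ) →L[ℝ] ℝ :=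
  ∑ i, dH k m i μ • ContinuousLinearMap.proj i

lemma gradH_apply (k m : ℕ) (μ v : Fin k → ℝ) :
    gradH k m μ v = ∑ i, dH k m i μ * v i := by
  simp [gradH, ContinuousLinearMap.sum_apply]

lemma dH_zero (k : ℕ) (i : Fin k) (μ : Fin k → ℝ) : dH k 0 i μ = 0 := by
  simp [dH]

lemma hasFDerivAt_Hpoly (k m : ℕ) (μ : Fin k → ℝ) :
    HasFDerivAt (fun μ => Hpoly k m μ) (gradH k m μ) μ := by
  have h : HasFDerivAt (fun μ : Fin k → ℝ => Hpoly k m μ)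
      (∑ α ∈ Finset.range (m+1), ∑ S ∈ Finset.univ.powersetCard α,
        (Ccoef m α : ℝ) •
          (∑ i ∈ S, (∏ j ∈ S.erase i, μ j) • (ContinuousLinearMap.proj (R := ℝ) i : (Fin k → ℝ) →L[ℝ] ℝ))) μ := by
    unfold Hpoly
    apply HasFDerivAt.fun_sum; intro α _
    apply HasFDerivAt.fun_sum; intro S _
    exact (HasFDerivAt.finset_prod (fun i _ => hasFDerivAt_apply i μ)).const_mul _
  convert h using 1
  · rfl
  ext v
  simp only [ContinuousLinearMap.sum_apply, ContinuousLinearMap.smul_apply,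
    ContinuousLinearMap.proj_apply, gradH_apply, dH, smul_eq_mul]
  simp only [Finset.sum_mul, ite_mul, zero_mul]
  rw [Finset.sum_comm]
  refine Finset.sum_congr rfl fun α _ => ?_
  rw [Finset.sum_comm]
  refine Finset.sum_congr rfl fun S _ => ?_
  rw [Finset.sum_ite_mem, Finset.univ_inter, Finset.mul_sum]
  exact Finset.sum_congr rfl fun i _ => by ring

def Esub (k : ℕ) (i : Fin k) (β : ℕ) (μ : Fin k → ℝ) : ℝ :=
  ∑ T ∈ (Finset.univ.erase i).powersetCard β, ∏ j ∈ T, μ j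

lemma dH_eq_Esub (k m : ℕ) (i : Fin k) (μ : Fin k → ℝ) :
    dH k m i μ = ∑ β ∈ Finset.range m, (Ccoef m (β+1) : ℝ) * Esub k i β μ := by
  unfold dH
  rw [Finset.sum_range_succ']
  have h0 : (∑ S ∈ Finset.univ.powersetCard 0, if i ∈ S then (Ccoef m 0 : ℝ) *
      ∏ i' ∈ S.erase i, μ i' else 0) = 0 := by
    simp
  rw [h0, add_zero]
  refine Finset.sum_congr rfl fun β _ => ?_
  rw [Esub, Finset.mul_sum]
  rw [← Finset.sum_filter]
  refine Finset.sum_bij' (fun S _ => S.erase i) (fun T _ => insert i T) ?_ ?_ ?_ ?_ ?_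
  · intro S hS
    simp only [Finset.mem_filter, Finset.mem_powersetCard] at hS ⊢
    refine ⟨fun x hx => ?_, ?_⟩
    · rw [Finset.mem_erase] at hx ⊢
      exact ⟨hx.1, Finset.mem_univ x⟩
    · rw [Finset.card_erase_of_mem hS.2, hS.1.2]; omega
  · intro T hT
    rw [Finset.mem_powersetCard] at hT
    have hiT : i ∉ T := fun h => (Finset.mem_erase.1 (hT.1 h)).1 rfl
    simp only [Finset.mem_filter, Finset.mem_powersetCard]
    exact ⟨⟨Finset.subset_univ _, by rw [Finset.card_insert_of_notMem hiT, hT.2]⟩,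
      Finset.mem_insert_self i T⟩
  · intro S hS
    simp only [Finset.mem_filter] at hS
    exact Finset.insert_erase hS.2
  · intro T hT
    rw [Finset.mem_powersetCard] at hT
    have hiT : i ∉ T := fun h => (Finset.mem_erase.1 (hT.1 h)).1 rfl
    exact Finset.erase_insert hiT
  · intro S hS
    rfl

lemma Ccoef_eq_zero (m α : ℕ) (h : m < α) : Ccoef m α = 0 := by
  unfold Ccoef
  rw [Finset.sum_eq_zero]
  intro c hc
  exfalso
  rw [Finset.mem_filter, Finset.Nat.mem_antidiagonalTuple] at hc
  have : α ≤ ∑ i, c i := by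
    calc α = ∑ _i : Fin α, 1 := by simp
    _ ≤ ∑ i, c i := Finset.sum_le_sum fun i _ => hc.2 i
  omega

lemma Ccoef_pos (m : ℕ) : 0 < Ccoef m m := by
  unfold Ccoef
  apply Finset.sum_pos
  · intro c _
    exact Nat.multinomial_pos _ _
  · refine ⟨fun _ => 1, ?_⟩
    rw [Finset.mem_filter, Finset.Nat.mem_antidiagonalTuple]
    exact ⟨by simp, fun i => le_refl 1⟩

lemma prod_neg' {n : ℕ} (T : Finset (Fin n)) (μ : Fin n → ℝ) :
    ∏ jj ∈ T, -μ jj = (-1:ℝ)^T.card * ∏ jj ∈ T, μ jj := by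
  rw [← Finset.prod_const, ← Finset.prod_mul_distrib]
  simp [neg_one_mul]

lemma key_vdm (k : ℕ) (hk : 1 ≤ k) (μ : Fin k → ℝ) (i r : Fin k) :
    ∑ β : Fin k, ((-1:ℝ)^(β:ℕ) * Esub k i (β:ℕ) μ) * μ r ^ (k - 1 - (β:ℕ)) =
      ∏ jj ∈ Finset.univ.erase i, (μ r - μ jj) := by
  have hcard : (Finset.univ.erase i).card = k - 1 := by
    rw [Finset.card_erase_of_mem (Finset.mem_univ i), Finset.card_univ, Fintype.card_fin]
  have h1 : ∏ jj ∈ Finset.univ.erase i, (μ r - μ jj)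
      = ∏ jj ∈ Finset.univ.erase i, ((fun jj => -μ jj) jj + (fun _ => μ r) jj) :=
    Finset.prod_congr rfl fun jj _ => by ring
  have hk1 : k - 1 + 1 = k := by omega
  rw [h1, Finset.prod_add, Finset.sum_powerset, hcard, hk1,
    Fin.sum_univ_eq_sum_range (fun β => ((-1:ℝ)^β * Esub k i β μ) * μ r ^ (k - 1 - β)) k]
  refine Finset.sum_congr rfl fun β _ => ?_
  rw [Esub, Finset.mul_sum, Finset.sum_mul]
  refine Finset.sum_congr rfl fun T hT => ?_
  rw [Finset.mem_powersetCard] at hT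
  rw [Finset.prod_const, prod_neg', hT.2]
  have : #((Finset.univ.erase i) \ T) = k - 1 - β := by
    rw [Finset.card_sdiff_of_subset hT.1, hcard, hT.2]
  rw [this]

lemma det_Esub_ne_zero (k : ℕ) (hk : 1 ≤ k) (μ : Fin k → ℝ) (hinj : Function.Injective μ) :
    (Matrix.of fun (β i : Fin k) => Esub k i (β:ℕ) μ).det ≠ 0 := by
  set M : Matrix (Fin k) (Fin k) ℝ := Matrix.of fun β i => Esub k i (β:ℕ) μ with hM
  set N : Matrix (Fin k) (Fin k) ℝ :=
    Matrix.of fun i β => (-1:ℝ)^(β:ℕ) * Esub k i (β:ℕ) μ with hN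
  set W : Matrix (Fin k) (Fin k) ℝ := Matrix.of fun β r => μ r ^ (k - 1 - (β:ℕ)) with hW
  have hNW : N * W = Matrix.diagonal (fun i => ∏ jj ∈ Finset.univ.erase i, (μ i - μ jj)) := by
    ext i r
    rw [Matrix.mul_apply]
    by_cases hir : i = r
    · subst hir
      rw [Matrix.diagonal_apply_eq]
      exact key_vdm k hk μ i i
    · rw [Matrix.diagonal_apply_ne _ hir]
      have : ∑ β, N i β * W β r = ∏ jj ∈ Finset.univ.erase i, (μ r - μ jj) :=
        key_vdm k hk μ i r
      rw [this]
      exact Finset.prod_eq_zero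
        (Finset.mem_erase.2 ⟨Ne.symm hir, Finset.mem_univ r⟩) (sub_self _)
  have hd : ∀ i, ∏ jj ∈ Finset.univ.erase i, (μ i - μ jj) ≠ 0 := fun i =>
    Finset.prod_ne_zero_iff.2 fun jj hjj =>
      sub_ne_zero.2 fun h => (Finset.mem_erase.1 hjj).1 (hinj h).symm
  have hdetN : N.det ≠ 0 := by
    intro h
    have h2 := congrArg Matrix.det hNW
    rw [Matrix.det_mul, h, zero_mul, Matrix.det_diagonal] at h2
    exact Finset.prod_ne_zero_iff.2 (fun i _ => hd i) h2.symm
  have hrel : N = Matrix.transpose M * Matrix.diagonal (fun β : Fin k => (-1:ℝ)^(β:ℕ)) := by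
    ext i β
    rw [Matrix.mul_diagonal]
    simp only [hN, hM, Matrix.of_apply, Matrix.transpose_apply]
    ring
  intro h
  apply hdetN
  rw [hrel, Matrix.det_mul, Matrix.det_transpose, h, zero_mul]

noncomputable def Bmat (k : ℕ) (z : (Fin k → ℝ) × (Fin k → ℝ)) : Matrix (Fin k) (Fin k) ℝ :=
  Matrix.of fun m i => dH k ((m:ℕ)+1) i z.1 +
    ∑ l ∈ Finset.Icc 1 (m:ℕ), ((2*((m:ℕ)+1)).choose (2*l) : ℝ) *
      (if h : l - 1 < k then z.2 ⟨l-1, h⟩ else 0) * dH k ((m:ℕ)+1-l) i z.1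

def mubar (k : ℕ) : Fin k → ℝ := fun i => (k : ℝ) - (i : ℕ)

lemma mubar_inj (k : ℕ) : Function.Injective (mubar k) := by
  intro i j h
  unfold mubar at h
  have : ((i:ℕ):ℝ) = ((j:ℕ):ℝ) := by linarith
  exact Fin.ext (Nat.cast_inj.mp this)

lemma det_Bmat_base (k : ℕ) (hk : 2 ≤ k) : (Bmat k (mubar k, 0)).det ≠ 0 := by
  have hfact : Bmat k (mubar k, 0) =
      (Matrix.of fun (m β : Fin k) => (Ccoef ((m:ℕ)+1) ((β:ℕ)+1) : ℝ)) *
        (Matrix.of fun (β i : Fin k) => Esub k i (β:ℕ) (mubar k)) := by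
    ext m i
    simp only [Bmat, Matrix.of_apply, Matrix.mul_apply]
    have hz : (∑ l ∈ Finset.Icc 1 (m:ℕ), ((2*((m:ℕ)+1)).choose (2*l) : ℝ) *
        (if h : l - 1 < k then (0 : Fin k → ℝ) ⟨l-1, h⟩ else 0) *
          dH k ((m:ℕ)+1-l) i (mubar k)) = 0 := by
      apply Finset.sum_eq_zero
      intro l _
      rcases Nat.lt_or_ge (l-1) k with h | h <;> simp
    rw [hz, add_zero, dH_eq_Esub]
    have hsub : Finset.range ((m:ℕ)+1) ⊆ Finset.range k :=
      Finset.range_subset_range.2 (by have := m.isLt; omega)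
    rw [Finset.sum_subset hsub (fun β hb hβ => by
      rw [Finset.mem_range] at hb
      have hβ' : ¬ β < (m:ℕ)+1 := fun hc => hβ (Finset.mem_range.2 hc)
      rw [Ccoef_eq_zero _ _ (by omega), Nat.cast_zero, zero_mul])]
    rw [← Fin.sum_univ_eq_sum_range (fun β => (Ccoef ((m:ℕ)+1) (β+1) : ℝ) *
      Esub k i β (mubar k)) k]
  rw [hfact, Matrix.det_mul]
  apply mul_ne_zero
  · rw [Matrix.det_of_lowerTriangular _ (fun i j hij => by
      simp only [Matrix.of_apply]
      have hij' : i < j := hij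
      have hij2 : (i:ℕ) < (j:ℕ) := hij'
      rw [Ccoef_eq_zero _ _ (by omega), Nat.cast_zero])]
    · apply Finset.prod_ne_zero_iff.2
      intro m _
      simp only [Matrix.of_apply]
      exact Nat.cast_ne_zero.2 (Ccoef_pos _).ne'
  · exact det_Esub_ne_zero k (by omega) (mubar k) (mubar_inj k)

lemma continuous_dH (k m : ℕ) (i : Fin k) : Continuous (fun μ : Fin k → ℝ => dH k m i μ) := by
  unfold dH
  apply continuous_finset_sum; intro α _
  apply continuous_finset_sum; intro S _
  by_cases hi : i ∈ S
  · simp only [hi, if_true]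
    exact continuous_const.mul (continuous_finset_prod _ fun l _ => continuous_apply l)
  · simp only [hi, if_false]
    exact continuous_const

lemma continuous_detB (k : ℕ) :
    Continuous fun z : (Fin k → ℝ) × (Fin k → ℝ) => (Bmat k z).det := by
  apply Continuous.matrix_det
  apply continuous_matrix; intro m i
  apply Continuous.add
  · exact (continuous_dH k _ i).comp continuous_fst
  · apply continuous_finset_sum; intro l _
    apply Continuous.mul
    · apply Continuous.mul continuous_const
      by_cases h : l - 1 < k
      · simp only [h, dif_pos]
        exact (continuous_apply _).comp continuous_snd
      · simp only [h, dif_neg, not_false_iff]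
        exact continuous_const
    · exact (continuous_dH k _ i).comp continuous_fst


/-- **Lemma `nbhd`.** For `p = 2k` even, `k ≥ 2`, there exist `μ̄₁ > ⋯ > μ̄_k > 0` and
`ε₀ > 0` such that for every `j` the derivative of `F^{(j)}` has rank `k` (is surjective)
at every point of the `ℓ∞`-ball with center `(μ̄₁, …, μ̄_k, 0)` and radius `ε₀ j^{2-p}`. -/
theorem rank_Fmap_on_ball (k : ℕ) (hk : 2 ≤ k) :
    ∃ (μbar : Fin k → ℝ) (ε₀ : ℝ),
      (∀ i i' : Fin k, i < i' → μbar i' < μbar i) ∧ (∀ i, 0 < μbar i) ∧ 0 < ε₀ ∧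
      ∀ j : ℕ, 1 ≤ j → ∀ (μ : Fin k → ℝ) (ν : ℝ),
        (∀ i, |μ i - μbar i| < ε₀ * (j : ℝ) ^ ((2 : ℤ) - 2 * (k : ℤ))) →
        |ν| < ε₀ * (j : ℝ) ^ ((2 : ℤ) - 2 * (k : ℤ)) →
        ∃ D : ((Fin k → ℝ) × ℝ) →L[ℝ] (Fin k → ℝ),
          HasFDerivAt (Fmap k j) D (μ, ν) ∧ Function.Surjective D := by
  have hopen : IsOpen {z : (Fin k → ℝ) × (Fin k → ℝ) | (Bmat k z).det ≠ 0} :=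
    isOpen_compl_singleton.preimage (continuous_detB k)
  obtain ⟨ε, hε, hball⟩ := Metric.isOpen_iff.1 hopen (mubar k, 0) (det_Bmat_base k hk)
  refine ⟨mubar k, ε, ?_, ?_, hε, ?_⟩
  · intro i i' hii'
    unfold mubar
    have : ((i:ℕ):ℝ) < ((i':ℕ):ℝ) := by exact_mod_cast hii'
    linarith
  · intro i
    unfold mubar
    have : ((i:ℕ):ℝ) < (k:ℝ) := by exact_mod_cast i.isLt
    linarith
  intro j hj μ ν hμ hν
  have hj1 : (1:ℝ) ≤ (j:ℝ) := by exact_mod_cast hj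
  have hj0 : (j:ℝ) ≠ 0 := by linarith
  have hkey : ∀ e : ℕ, (e:ℤ) ≤ 2*(k:ℤ)-2 → (j:ℝ)^((2:ℤ)-2*(k:ℤ)) * (j:ℝ)^e ≤ 1 := by
    intro e he
    rw [← zpow_natCast (j:ℝ) e, ← zpow_add₀ hj0]
    exact zpow_le_one_of_nonpos₀ hj1 (by omega)
  have hjp : (0:ℝ) < (j:ℝ)^((2:ℤ)-2*(k:ℤ)) := zpow_pos (by linarith) _
  -- the substituted second variable
  set w : Fin k → ℝ := fun l => if (l:ℕ)+2 ≤ k then ν * (j:ℝ)^(2*((l:ℕ)+1)) else 0 with hwdef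
  have hwb : ∀ l : Fin k, |w l| < ε := by
    intro l
    rw [hwdef]
    dsimp only
    split_ifs with hcase
    · rw [abs_mul, abs_pow, abs_of_pos (by linarith : (0:ℝ) < (j:ℝ))]
      calc |ν| * (j:ℝ)^(2*((l:ℕ)+1))
          < (ε * (j:ℝ)^((2:ℤ)-2*(k:ℤ))) * (j:ℝ)^(2*((l:ℕ)+1)) := by
            apply mul_lt_mul_of_pos_right hν (pow_pos (by linarith) _)
        _ = ε * ((j:ℝ)^((2:ℤ)-2*(k:ℤ)) * (j:ℝ)^(2*((l:ℕ)+1))) := by ring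
        _ ≤ ε * 1 := by
            apply mul_le_mul_of_nonneg_left (hkey _ (by push_cast; omega)) (le_of_lt hε)
        _ = ε := mul_one ε
    · simpa using hε
  have hμb : ∀ i, |μ i - mubar k i| < ε := by
    intro i
    calc |μ i - mubar k i| < ε * (j:ℝ)^((2:ℤ)-2*(k:ℤ)) := hμ i
      _ = ε * ((j:ℝ)^((2:ℤ)-2*(k:ℤ)) * (j:ℝ)^(0:ℕ)) := by simp
      _ ≤ ε * 1 := mul_le_mul_of_nonneg_left (hkey 0 (by omega)) (le_of_lt hε)
      _ = ε := mul_one ε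
  have hmem : (μ, w) ∈ Metric.ball ((mubar k, 0) : (Fin k → ℝ) × (Fin k → ℝ)) ε := by
    rw [Metric.mem_ball, Prod.dist_eq]
    apply max_lt
    · rw [dist_pi_lt_iff hε]
      intro i
      rw [Real.dist_eq]
      exact hμb i
    · rw [dist_pi_lt_iff hε]
      intro l
      rw [Real.dist_eq]
      simpa using hwb l
  have hdet : (Bmat k (μ, w)).det ≠ 0 := hball hmem
  classical
  set gradG : Fin k → ((Fin k → ℝ) →L[ℝ] ℝ) := fun m => ∑ l ∈ Finset.Icc 1 ((m:ℕ)+1),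
    (((2*((m:ℕ)+1)).choose (2*l) : ℝ) * (j:ℝ)^(2*l)) • gradH k ((m:ℕ)+1-l) μ with hgradG
  set φ' : Fin k → (((Fin k → ℝ) × ℝ) →L[ℝ] ℝ) := fun m =>
    (gradH k ((m:ℕ)+1) μ).comp (ContinuousLinearMap.fst ℝ (Fin k → ℝ) ℝ) +
      (ν • ((gradG m).comp (ContinuousLinearMap.fst ℝ (Fin k → ℝ) ℝ)) +
        (∑ l ∈ Finset.Icc 1 ((m:ℕ)+1), ((2*((m:ℕ)+1)).choose (2*l) : ℝ) * (j:ℝ)^(2*l) *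
          Hpoly k ((m:ℕ)+1-l) μ) • (ContinuousLinearMap.snd ℝ (Fin k → ℝ) ℝ)) with hφ'
  refine ⟨ContinuousLinearMap.pi φ', ?_, ?_⟩
  · unfold Fmap
    apply hasFDerivAt_pi.2
    intro m
    rw [hφ']
    unfold Fpoly
    have hGμ : HasFDerivAt (fun μ' : Fin k → ℝ => ∑ l ∈ Finset.Icc 1 ((m:ℕ)+1),
        ((2*((m:ℕ)+1)).choose (2*l) : ℝ) * (j:ℝ)^(2*l) * Hpoly k ((m:ℕ)+1-l) μ')
        (gradG m) μ := by
      rw [hgradG]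
      exact HasFDerivAt.fun_sum fun l _ => (hasFDerivAt_Hpoly k ((m:ℕ)+1-l) μ).const_mul _
    exact ((hasFDerivAt_Hpoly k ((m:ℕ)+1) μ).comp (μ,ν) (hasFDerivAt_fst (𝕜 := ℝ) (E := Fin k → ℝ) (F := ℝ) (p := (μ, ν)))).fun_add
      ((hasFDerivAt_snd (𝕜 := ℝ) (E := Fin k → ℝ) (F := ℝ) (p := (μ, ν))).fun_mul (hGμ.comp (μ,ν) (hasFDerivAt_fst (𝕜 := ℝ) (E := Fin k → ℝ) (F := ℝ) (p := (μ, ν)))))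
  · have hBv : ∀ v : Fin k → ℝ,
        (ContinuousLinearMap.pi φ') (v, (0:ℝ)) = (Bmat k (μ, w)).mulVec v := by
      intro v
      funext m
      have hw' : ∀ l ∈ Finset.Icc 1 (m:ℕ),
          (if h : l - 1 < k then w ⟨l-1,h⟩ else 0) = ν * (j:ℝ)^(2*l) := by
        intro l hl
        rw [Finset.mem_Icc] at hl
        have hmk := m.isLt
        have hlk : l - 1 < k := by omega
        rw [dif_pos hlk, hwdef]
        dsimp only
        rw [if_pos (by omega : (l-1)+2 ≤ k)]
        congr 2
        omega
      simp only [ContinuousLinearMap.pi_apply, hφ', ContinuousLinearMap.add_apply,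
        ContinuousLinearMap.coe_comp', Function.comp_apply,
        ContinuousLinearMap.coe_fst', ContinuousLinearMap.coe_snd',
        ContinuousLinearMap.smul_apply, smul_eq_mul, hgradG,
        ContinuousLinearMap.sum_apply, gradH_apply, mul_zero, add_zero]
      rw [Finset.sum_Icc_succ_top (by omega : 1 ≤ (m:ℕ)+1)]
      rw [show (m:ℕ)+1 - ((m:ℕ)+1) = 0 from by omega]
      simp only [dH_zero, zero_mul, Finset.sum_const_zero, mul_zero, add_zero]
      have hR : (Bmat k (μ, w)).mulVec v m = ∑ i, (dH k ((m:ℕ)+1) i μ +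
          ∑ l ∈ Finset.Icc 1 (m:ℕ), ((2*((m:ℕ)+1)).choose (2*l) : ℝ) *
            (ν * (j:ℝ)^(2*l)) * dH k ((m:ℕ)+1-l) i μ) * v i := by
        simp only [Matrix.mulVec, dotProduct, Bmat, Matrix.of_apply]
        refine Finset.sum_congr rfl fun i _ => ?_
        congr 1
        refine congrArg _ (Finset.sum_congr rfl fun l hl => ?_)
        rw [hw' l hl]
      rw [hR]
      simp only [add_mul, Finset.sum_add_distrib]
      congr 1
      simp only [Finset.sum_mul]
      rw [Finset.sum_comm, Finset.mul_sum]
      refine Finset.sum_congr rfl fun l _ => ?_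
      rw [Finset.mul_sum, Finset.mul_sum]
      refine Finset.sum_congr rfl fun i _ => ?_
      ring
    intro y
    refine ⟨((Bmat k (μ, w))⁻¹.mulVec y, 0), ?_⟩
    rw [hBv, Matrix.mulVec_mulVec, Matrix.mul_nonsing_inv _ (isUnit_iff_ne_zero.2 hdet),
      Matrix.one_mulVec]
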